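/- Let V be a nonzero finite-dimensional commutative real algebra with positive definite associative symmetric bilinear form, and suppose V has a unit element e and dim V ≥ 2. Then V has at least three distinct nonzero idempotents. -/

import Mathlib

set_option maxHeartbeats 1000000
set_option synthInstance.maxHeartbeats 1000000


lemma key_lagrange {E : Type*} [NormedAddCommGroup E] [NormedSpace ℝ E]
    [FiniteDimensional ℝ E] [Nontrivial E]
    (g : E →L[ℝ] E →L[ℝ] ℝ) (hgs : ∀ x y, g x y = g y x) (hg : ∀ x, x ≠ 0 → 0 < g x x)
    (T : E →L[ℝ] E →L[ℝ] E →L[ℝ] ℝ)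
    (hT1 : ∀ x y z, T x y z = T y x z) (hT2 : ∀ x y z, T x y z = T x z y) :
    ∃ (w : E) (μ : ℝ), g w w = 1 ∧ ∀ h, T w w h = μ * g w h := by
  set G : E → ℝ := fun x => g x x with hGdef
  set F : E → ℝ := fun x => T x x x with hFdef
  have hGd : ∀ x : E, HasStrictFDerivAt G
      ((g x).comp (ContinuousLinearMap.id ℝ E) + g.flip x) x := fun x =>
    (g.hasStrictFDerivAt).clm_apply (hasStrictFDerivAt_id x)
  have hqd : ∀ x : E, HasStrictFDerivAt (fun y => T y y)
      ((T x).comp (ContinuousLinearMap.id ℝ E) + T.flip x) x := fun x =>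
    (T.hasStrictFDerivAt).clm_apply (hasStrictFDerivAt_id x)
  have hFd : ∀ x : E, HasStrictFDerivAt F
      (((T x x).comp (ContinuousLinearMap.id ℝ E)) +
        ((T x).comp (ContinuousLinearMap.id ℝ E) + T.flip x).flip x) x := fun x =>
    (hqd x).clm_apply (hasStrictFDerivAt_id x)
  have hDG : ∀ x h : E, ((g x).comp (ContinuousLinearMap.id ℝ E) + g.flip x) h
      = 2 * g x h := by
    intro x h
    simp only [ContinuousLinearMap.add_apply, ContinuousLinearMap.coe_comp',
      Function.comp_apply, ContinuousLinearMap.coe_id', id_eq, ContinuousLinearMap.flip_apply]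
    rw [hgs h x]; ring
  have hDF : ∀ x h : E, (((T x x).comp (ContinuousLinearMap.id ℝ E)) +
      ((T x).comp (ContinuousLinearMap.id ℝ E) + T.flip x).flip x) h = 3 * T x x h := by
    intro x h
    simp only [ContinuousLinearMap.add_apply, ContinuousLinearMap.coe_comp',
      Function.comp_apply, ContinuousLinearMap.coe_id', id_eq, ContinuousLinearMap.flip_apply]
    rw [hT1 h x, hT2 x h x]; ring
  have hGc : Continuous G := continuous_iff_continuousAt.2 fun x =>
    (hGd x).hasFDerivAt.continuousAt
  have hFc : Continuous F := continuous_iff_continuousAt.2 fun x =>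
    (hFd x).hasFDerivAt.continuousAt
  -- min of G on the unit sphere
  obtain ⟨y₀, hy₀s, hy₀min⟩ := (isCompact_sphere (0:E) 1).exists_isMinOn
    (NormedSpace.sphere_nonempty.2 zero_le_one) hGc.continuousOn
  have hy₀ : y₀ ≠ 0 := by
    intro h
    rw [mem_sphere_zero_iff_norm, h, norm_zero] at hy₀s
    norm_num at hy₀s
  have hm₀ : 0 < G y₀ := hg y₀ hy₀
  set m₀ := G y₀ with hm₀def
  set S : Set E := {x | G x = 1} with hSdef
  have hSclosed : IsClosed S := isClosed_eq hGc continuous_const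
  have hSsub : S ⊆ Metric.closedBall 0 (Real.sqrt m₀⁻¹) := by
    intro x hx
    have hx1 : G x = 1 := hx
    have hx0 : x ≠ 0 := by
      intro h
      rw [h] at hx1
      simp [hGdef] at hx1
    have hnx : 0 < ‖x‖ := norm_pos_iff.2 hx0
    have hu : (‖x‖⁻¹ • x) ∈ Metric.sphere (0:E) 1 := by
      rw [mem_sphere_zero_iff_norm, norm_smul, norm_inv, norm_norm,
        inv_mul_cancel₀ hnx.ne']
    have h1 : m₀ ≤ G (‖x‖⁻¹ • x) := hy₀min hu
    have h2 : G (‖x‖⁻¹ • x) = ‖x‖⁻¹ * (‖x‖⁻¹ * G x) := by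
      simp only [hGdef, map_smul, ContinuousLinearMap.smul_apply, smul_eq_mul]
    rw [h2, hx1, mul_one] at h1
    rw [Metric.mem_closedBall, dist_zero_right]
    rw [show Real.sqrt m₀⁻¹ = Real.sqrt m₀⁻¹ from rfl]
    rw [← Real.sqrt_sq hnx.le]
    apply Real.sqrt_le_sqrt
    have hinv : ‖x‖⁻¹ * ‖x‖⁻¹ = (‖x‖^2)⁻¹ := by rw [pow_two, mul_inv]
    rw [hinv] at h1
    have hsq : 0 < ‖x‖^2 := by positivity
    calc ‖x‖^2 = ((‖x‖^2)⁻¹)⁻¹ := by rw [inv_inv]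
    _ ≤ m₀⁻¹ := by
        apply inv_anti₀ hm₀ h1
  have hScompact : IsCompact S :=
    (isCompact_closedBall (0:E) _).of_isClosed_subset hSclosed hSsub
  have hSne : S.Nonempty := by
    obtain ⟨y, hy⟩ := exists_ne (0:E)
    have ha : 0 < G y := hg y hy
    refine ⟨(Real.sqrt (G y))⁻¹ • y, ?_⟩
    have hs := Real.mul_self_sqrt ha.le
    have hs0 : Real.sqrt (G y) ≠ 0 := (Real.sqrt_pos.2 ha).ne'
    show G ((Real.sqrt (G y))⁻¹ • y) = 1
    have : G ((Real.sqrt (G y))⁻¹ • y)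
        = (Real.sqrt (G y))⁻¹ * ((Real.sqrt (G y))⁻¹ * G y) := by
      simp only [hGdef, map_smul, ContinuousLinearMap.smul_apply, smul_eq_mul]
    rw [this, ← mul_assoc]
    rw [show (Real.sqrt (G y))⁻¹ * (Real.sqrt (G y))⁻¹ = (Real.sqrt (G y) * Real.sqrt (G y))⁻¹ by rw [mul_inv]]
    rw [hs]
    field_simp
  obtain ⟨x₀, hx₀S, hx₀max⟩ := hScompact.exists_isMaxOn hSne hFc.continuousOn
  have hx₀ : G x₀ = 1 := hx₀S
  have hsets : {x | G x = G x₀} = S := by rw [hx₀]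
  have hextr : IsLocalExtrOn F {x | G x = G x₀} x₀ := by
    rw [hsets]; exact Or.inr hx₀max.localize
  obtain ⟨a, b, hab, heq⟩ :=
    hextr.exists_multipliers_of_hasStrictFDerivAt_1d (hGd x₀) (hFd x₀)
  have heval : ∀ h, a * (2 * g x₀ h) + b * (3 * T x₀ x₀ h) = 0 := by
    intro h
    have h1 := DFunLike.congr_fun heq h
    rw [ContinuousLinearMap.add_apply, ContinuousLinearMap.smul_apply,
      ContinuousLinearMap.smul_apply, ContinuousLinearMap.zero_apply,
      hDG x₀ h, hDF x₀ h, smul_eq_mul, smul_eq_mul] at h1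
    exact h1
  have hb : b ≠ 0 := by
    intro hb0
    have ha0 : a ≠ 0 := by
      intro ha0
      exact hab (by simp [ha0, hb0, Prod.ext_iff])
    have := heval x₀
    rw [hb0] at this
    have hgx : g x₀ x₀ = 1 := hx₀
    rw [hgx] at this
    norm_num at this
    exact ha0 this
  refine ⟨x₀, -(2*a)/(3*b), hx₀, fun h => ?_⟩
  have h3 : (3:ℝ)*b ≠ 0 := by
    intro hc
    exact hb (by linarith)
  rw [div_mul_eq_mul_div, eq_div_iff h3]
  linear_combination heval h

lemma key_transfer {M : Type*} [AddCommGroup M] [Module ℝ M]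
    {E : Type*} [NormedAddCommGroup E] [NormedSpace ℝ E] [FiniteDimensional ℝ E]
    [Nontrivial E]
    (ψ : E →ₗ[ℝ] M) (hψ : Function.Injective ψ)
    (g : M →ₗ[ℝ] M →ₗ[ℝ] ℝ) (hgs : ∀ x y, g x y = g y x) (hg : ∀ x, x ≠ 0 → 0 < g x x)
    (T : M →ₗ[ℝ] M →ₗ[ℝ] M →ₗ[ℝ] ℝ) (hT1 : ∀ x y z, T x y z = T y x z)
    (hT2 : ∀ x y z, T x y z = T x z y) :
    ∃ (w : E) (μ : ℝ), g (ψ w) (ψ w) = 1 ∧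
      ∀ h : E, T (ψ w) (ψ w) (ψ h) = μ * g (ψ w) (ψ h) := by
  set glin : E →ₗ[ℝ] E →ₗ[ℝ] ℝ := g.compl₁₂ ψ ψ with hglindef
  set Tlin : E →ₗ[ℝ] E →ₗ[ℝ] E →ₗ[ℝ] ℝ :=
    (T.compl₁₂ ψ ψ).compr₂ (LinearMap.lcomp ℝ ℝ ψ) with hTlindef
  set ε1 : (E →ₗ[ℝ] ℝ) →ₗ[ℝ] (E →L[ℝ] ℝ) :=
    (LinearMap.toContinuousLinearMap : (E →ₗ[ℝ] ℝ) ≃ₗ[ℝ] (E →L[ℝ] ℝ)).toLinearMap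
    with hε1def
  set ε2 : (E →ₗ[ℝ] (E →L[ℝ] ℝ)) →ₗ[ℝ] (E →L[ℝ] E →L[ℝ] ℝ) :=
    (LinearMap.toContinuousLinearMap :
      (E →ₗ[ℝ] (E →L[ℝ] ℝ)) ≃ₗ[ℝ] (E →L[ℝ] E →L[ℝ] ℝ)).toLinearMap with hε2def
  haveI : ContinuousAdd (E →L[ℝ] E →L[ℝ] ℝ) := by
    have h : IsTopologicalAddGroup (E →L[ℝ] E →L[ℝ] ℝ) := inferInstance
    exact h.toContinuousAdd
  set ε3 : (E →ₗ[ℝ] (E →L[ℝ] E →L[ℝ] ℝ)) →ₗ[ℝ] (E →L[ℝ] E →L[ℝ] E →L[ℝ] ℝ) :=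
    (LinearMap.toContinuousLinearMap (𝕜 := ℝ) (E := E) (F' := E →L[ℝ] E →L[ℝ] ℝ)).toLinearMap
      with hε3def
  set gc : E →L[ℝ] E →L[ℝ] ℝ := ε2 (ε1.comp glin) with hgcdef
  set Tc : E →L[ℝ] E →L[ℝ] E →L[ℝ] ℝ :=
    ε3 (ε2.comp (Tlin.compr₂ ε1)) with hTcdef
  have hgc_app : ∀ x y, gc x y = g (ψ x) (ψ y) := by
    intro x y
    simp [hgcdef, hglindef, hε1def, hε2def]
  have hTc_app : ∀ x y z, Tc x y z = T (ψ x) (ψ y) (ψ z) := by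
    intro x y z
    simp [hTcdef, hTlindef, hε1def, hε2def, hε3def]
  have hgsym' : ∀ x y, gc x y = gc y x := by
    intro x y; rw [hgc_app, hgc_app, hgs]
  have hgpos' : ∀ x, x ≠ 0 → 0 < gc x x := by
    intro x hx
    rw [hgc_app]
    apply hg
    intro h
    exact hx (hψ (by rw [h, map_zero]))
  have hT1' : ∀ x y z, Tc x y z = Tc y x z := by
    intro x y z; rw [hTc_app, hTc_app, hT1]
  have hT2' : ∀ x y z, Tc x y z = Tc x z y := by
    intro x y z; rw [hTc_app, hTc_app, hT2]
  obtain ⟨w, μ, hw1, hw2⟩ := key_lagrange gc hgsym' hgpos' Tc hT1' hT2'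
  refine ⟨w, μ, ?_, ?_⟩
  · rw [← hgc_app]; exact hw1
  · intro h
    have := hw2 h
    rwa [hTc_app, hgc_app] at this

/-- a commutative unital real algebra of dimension ≥ 2 with positive
definite associative symmetric bilinear form has at least three distinct nonzero
idempotents. -/
theorem stmt_18 {V : Type*} [AddCommGroup V] [Module ℝ V] [FiniteDimensional ℝ V]
    (mul : V →ₗ[ℝ] V →ₗ[ℝ] V) (hcomm : ∀ x y, mul x y = mul y x)
    (B : V →ₗ[ℝ] V →ₗ[ℝ] ℝ) (hsymm : ∀ x y, B x y = B y x)
    (hassoc : ∀ x y z, B (mul x y) z = B x (mul y z))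
    (hpos : ∀ x, x ≠ 0 → 0 < B x x)
    (e : V) (he : ∀ x, mul e x = x)
    (hdim : 2 ≤ Module.finrank ℝ V) :
    ∃ c₁ c₂ c₃ : V, mul c₁ c₁ = c₁ ∧ mul c₂ c₂ = c₂ ∧ mul c₃ c₃ = c₃ ∧
      c₁ ≠ 0 ∧ c₂ ≠ 0 ∧ c₃ ≠ 0 ∧ c₁ ≠ c₂ ∧ c₁ ≠ c₃ ∧ c₂ ≠ c₃ := by
  classical
  set W := LinearMap.ker (B.flip e) with hWdef
  have hmemW : ∀ x : V, x ∈ W ↔ B x e = 0 := by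
    intro x; simp [hWdef, LinearMap.mem_ker]
  have hWpos : 0 < Module.finrank ℝ ↥W := by
    have h1 := LinearMap.finrank_range_add_finrank_ker (B.flip e)
    have h2 : Module.finrank ℝ ↥(LinearMap.range (B.flip e)) ≤ 1 := by
      have h3 := Submodule.finrank_le (LinearMap.range (B.flip e))
      simpa using h3
    have h4 : Module.finrank ℝ ↥W = Module.finrank ℝ ↥(LinearMap.ker (B.flip e)) := by
      rw [hWdef]
    omega
  haveI hWnt : Nontrivial ↥W := Module.finrank_pos_iff.mp hWpos
  set n := Module.finrank ℝ ↥W with hndef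
  set φ : (Fin n → ℝ) ≃ₗ[ℝ] ↥W := (Module.finBasis ℝ ↥W).equivFun.symm with hφdef
  haveI : Nontrivial (Fin n → ℝ) := φ.toEquiv.nontrivial
  set ψ : (Fin n → ℝ) →ₗ[ℝ] V := W.subtype ∘ₗ φ.toLinearMap with hψdef
  have hψinj : Function.Injective ψ := by
    rw [hψdef]
    exact W.injective_subtype.comp φ.injective
  have hψmem : ∀ x, ψ x ∈ W := fun x => (φ x).2
  have hψsurj : ∀ v ∈ W, ∃ x, ψ x = v := by
    intro v hv
    exact ⟨φ.symm ⟨v, hv⟩, by simp [hψdef]⟩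
  have hBsw : ∀ a b c : V, B (mul a b) c = B (mul a c) b := by
    intro a b c
    rw [hsymm (mul a b) c, ← hassoc c a b, hcomm c a]
  set T : V →ₗ[ℝ] V →ₗ[ℝ] V →ₗ[ℝ] ℝ := mul.compr₂ B with hTdef
  have hT_app : ∀ x y z : V, T x y z = B (mul x y) z := by
    intro x y z; rw [hTdef]; rfl
  have hT1 : ∀ x y z, T x y z = T y x z := by
    intro x y z; rw [hT_app, hT_app, hcomm]
  have hT2 : ∀ x y z, T x y z = T x z y := by
    intro x y z; rw [hT_app, hT_app, hBsw]
  obtain ⟨w', μ, hw1, hw2⟩ := key_transfer ψ hψinj B hsymm hpos T hT1 hT2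
  set w : V := ψ w' with hwdef
  have hww : B w w = 1 := hw1
  have hwe : B w e = 0 := (hmemW w).1 (hψmem w')
  have hmu : ∀ v, B v e = 0 → B (mul w w) v = μ * B w v := by
    intro v hv
    obtain ⟨h, rfl⟩ := hψsurj v ((hmemW v).2 hv)
    have h6 := hw2 h
    rwa [hT_app] at h6
  have hw0 : w ≠ 0 := by
    intro h
    rw [h] at hww
    simp at hww
  have he0 : e ≠ 0 := by
    intro h
    apply hw0
    have h7 := he w
    rw [h] at h7
    simpa using h7.symm
  have hBee : 0 < B e e := hpos e he0
  set ν : ℝ := (B e e)⁻¹ with hνdef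
  have hν : 0 < ν := inv_pos.2 hBee
  have hmule : ∀ x, mul x e = x := fun x => (hcomm x e).trans (he x)
  have hBwwe : B (mul w w) e = 1 := by
    rw [hassoc w w e, hmule w, hww]
  set u : V := mul w w - μ • w - ν • e with hudef
  have hBu : ∀ z, B u z = B (mul w w) z - μ * B w z - ν * B e z := by
    intro z
    rw [hudef]
    simp [map_sub, map_smul, LinearMap.sub_apply, LinearMap.smul_apply, smul_eq_mul]
  have hue : B u e = 0 := by
    rw [hBu e, hBwwe, hwe, hνdef, inv_mul_cancel₀ hBee.ne']
    ring
  have huu : B u u = 0 := by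
    have h2 : B u u = B (mul w w) u - μ * B w u - ν * B e u := hBu u
    have h3 : B (mul w w) u = μ * B w u := hmu u hue
    have h4 : B e u = 0 := by rw [hsymm]; exact hue
    rw [h2, h3, h4]; ring
  have hu0 : u = 0 := by
    by_contra h
    exact absurd huu (hpos u h).ne'
  have hmulww : mul w w = μ • w + ν • e := by
    have h5 : mul w w - μ • w - ν • e = 0 := by rw [← hudef]; exact hu0
    rw [sub_sub, sub_eq_zero] at h5
    exact h5
  set D : ℝ := μ^2 + 4*ν with hDdef
  have hD : 0 < D := by nlinarith [sq_nonneg μ, hν]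
  set t : ℝ := (Real.sqrt D)⁻¹ with htdef
  have hsqrt : 0 < Real.sqrt D := Real.sqrt_pos.2 hD
  have ht : 0 < t := inv_pos.2 hsqrt
  have htD : t^2 * D = 1 := by
    have h5 : Real.sqrt D ^ 2 = D := Real.sq_sqrt hD.le
    rw [htdef, inv_pow, h5, inv_mul_cancel₀ hD.ne']
  have htD' : t^2 * (μ^2 + 4*ν) = 1 := by rw [← hDdef]; exact htD
  set s : ℝ := (1 - μ*t)/2 with hsdef
  set c : V := s • e + t • w with hcdef
  have hexp : mul c c = (s^2 + ν*t^2) • e + (2*(s*t) + μ*t^2) • w := by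
    rw [hcdef]
    simp only [map_add, map_smul, LinearMap.add_apply, LinearMap.smul_apply,
      he, hmule, hmulww]
    module
  have hc1 : s^2 + ν*t^2 = s := by
    rw [hsdef]
    linear_combination htD' / 4
  have hc2 : 2*(s*t) + μ*t^2 = t := by
    rw [hsdef]; ring
  have hcc : mul c c = c := by
    rw [hexp, hc1, hc2, ← hcdef]
  have hce : mul c e = c := hmule c
  have hcc2 : mul (e - c) (e - c) = e - c := by
    simp only [map_sub, LinearMap.sub_apply, he, hce, hcc]
    abel
  have hBew : B e w = 0 := by rw [hsymm]; exact hwe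
  have hBcw : B c w = t := by
    have h8 : B c w = s * B e w + t * B w w := by
      rw [hcdef]
      simp [map_add, map_smul, LinearMap.add_apply, LinearMap.smul_apply, smul_eq_mul]
    rw [h8, hBew, hww]; ring
  have hBecw : B (e - c) w = -t := by
    have h9 : B (e - c) w = B e w - B c w := by
      simp [map_sub, LinearMap.sub_apply]
    rw [h9, hBew, hBcw]; ring
  refine ⟨c, e - c, e, hcc, hcc2, he e, ?_, ?_, he0, ?_, ?_, ?_⟩
  · intro h
    rw [h] at hBcw
    simp at hBcw
    linarith
  · intro h
    rw [h] at hBecw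
    simp at hBecw
    linarith
  · intro h
    have h10 := congrArg (fun v => B v w) h
    rw [hBcw, hBecw] at h10
    linarith
  · intro h
    rw [h, hBew] at hBcw
    linarith
  · intro h
    have h11 : c = 0 := sub_eq_self.mp h
    rw [h11] at hBcw
    simp at hBcw
    linarith
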